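/- Assume char F ≠ 2 and let d ∈ Fˣ. The stabilizer of x(d) in G equals T ∪ σ·T, where T := {(m(a₁,b₁), m(a₂,b₂), m(a₁,b₁)·m(a₂,b₂)⁻¹) : a₁,b₁,a₂,b₂ ∈ F, a₁² − d·b₁² ≠ 0, a₂² − d·b₂² ≠ 0} and σ := (γ, γ, γ) with γ := diag(1,−1); in particular σ stabilizes x(d) and σ·T = T·σ. -/

import Mathlib

open Matrix

/-- `2 × 2` matrices over `F`. -/
abbrev M2 (F : Type*) := Matrix (Fin 2) (Fin 2) F

/-- The right action of `G = GL₂(F) × GL₂(F) × GL₂(F)` on `V = M₂(F) × M₂(F)`. -/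
noncomputable def act {F : Type*} [Field F] (v : M2 F × M2 F)
    (g : GL (Fin 2) F × GL (Fin 2) F × GL (Fin 2) F) : M2 F × M2 F :=
  ((((g.2.2 : M2 F) 0 0) • (((g.1⁻¹ : GL (Fin 2) F) : M2 F) * v.1 * (g.2.1 : M2 F)) +
      ((g.2.2 : M2 F) 1 0) • (((g.1⁻¹ : GL (Fin 2) F) : M2 F) * v.2 * (g.2.1 : M2 F))),
   (((g.2.2 : M2 F) 0 1) • (((g.1⁻¹ : GL (Fin 2) F) : M2 F) * v.1 * (g.2.1 : M2 F)) +
      ((g.2.2 : M2 F) 1 1) • (((g.1⁻¹ : GL (Fin 2) F) : M2 F) * v.2 * (g.2.1 : M2 F))))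

/-- The regular representative `x(d) = (I₂, δ_d)` with `δ_d = [[0,d],[1,0]]`. -/
def xd {F : Type*} [Field F] (d : F) : M2 F × M2 F := ((1 : M2 F), !![0, d; 1, 0])

/-- `m(a,b) = [[a, b·d],[b, a]] = a·I₂ + b·δ_d`. -/
def mm {F : Type*} [Field F] (d a b : F) : M2 F := !![a, b * d; b, a]

/-- `γ = diag(1,−1)` as an element of `GL₂(F)` (it is its own inverse). -/
noncomputable def gammaGL (F : Type*) [Field F] : GL (Fin 2) F :=
  ⟨!![1, 0; 0, -1], !![1, 0; 0, -1],
    by ext i j; fin_cases i <;> fin_cases j <;>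
      simp [Matrix.mul_apply, Fin.sum_univ_two],
    by ext i j; fin_cases i <;> fin_cases j <;>
      simp [Matrix.mul_apply, Fin.sum_univ_two]⟩

/-- The connected part `T` of the stabilizer of `x(d)`. -/
noncomputable def Tset {F : Type*} [Field F] (d : F) :
    Set (GL (Fin 2) F × GL (Fin 2) F × GL (Fin 2) F) :=
  {g | ∃ a₁ b₁ a₂ b₂ : F, a₁ ^ 2 - d * b₁ ^ 2 ≠ 0 ∧ a₂ ^ 2 - d * b₂ ^ 2 ≠ 0 ∧
    (g.1 : M2 F) = mm d a₁ b₁ ∧ (g.2.1 : M2 F) = mm d a₂ b₂ ∧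
    (g.2.2 : M2 F) = mm d a₁ b₁ * (mm d a₂ b₂)⁻¹}

section Helpers

variable {F : Type*} [Field F]

lemma mm_mul (d a b a' b' : F) :
    mm d a b * mm d a' b' = mm d (a * a' + b * b' * d) (a * b' + b * a') := by
  ext i j; fin_cases i <;> fin_cases j <;>
    (simp [mm, Matrix.mul_apply, Matrix.vecMul, dotProduct, Fin.sum_univ_two]; ring)

lemma det_mm (d a b : F) : (mm d a b).det = a ^ 2 - d * b ^ 2 := by
  simp [mm, Matrix.det_fin_two]; ring

lemma mm_inv {d a b : F} (h : a ^ 2 - d * b ^ 2 ≠ 0) :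
    (mm d a b)⁻¹ = (a ^ 2 - d * b ^ 2)⁻¹ • mm d a (-b) := by
  apply Matrix.inv_eq_right_inv
  have h' : a ^ 2 - b ^ 2 * d ≠ 0 := by intro h0; apply h; linear_combination h0
  ext i j; fin_cases i <;> fin_cases j <;>
    (simp [mm, Matrix.mul_apply, Matrix.vecMul, dotProduct, Fin.sum_univ_two]; field_simp; ring)

lemma det_coe_ne_zero (g : GL (Fin 2) F) : ((g : M2 F)).det ≠ 0 := by
  have := (Matrix.isUnit_iff_isUnit_det (g : M2 F)).1 g.isUnit
  exact this.ne_zero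

lemma coe_mul_coe_inv (g : GL (Fin 2) F) :
    (g : M2 F) * ((g⁻¹ : GL (Fin 2) F) : M2 F) = 1 := by
  rw [Matrix.coe_units_inv]
  exact Matrix.mul_nonsing_inv _ (isUnit_iff_ne_zero.2 (det_coe_ne_zero g))

lemma act_mul (v : M2 F × M2 F) (g h : GL (Fin 2) F × GL (Fin 2) F × GL (Fin 2) F) :
    act v (g * h) = act (act v g) h := by
  have h1 : ((((g * h).1)⁻¹ : GL (Fin 2) F) : M2 F)
      = ((h.1⁻¹ : GL (Fin 2) F) : M2 F) * ((g.1⁻¹ : GL (Fin 2) F) : M2 F) := by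
    simp [Prod.fst_mul, _root_.mul_inv_rev, Units.val_mul]
  have h2 : (((g * h).2.1 : GL (Fin 2) F) : M2 F)
      = ((g.2.1 : GL (Fin 2) F) : M2 F) * ((h.2.1 : GL (Fin 2) F) : M2 F) := by
    simp [Units.val_mul]
  have h3 : (((g * h).2.2 : GL (Fin 2) F) : M2 F)
      = ((g.2.2 : GL (Fin 2) F) : M2 F) * ((h.2.2 : GL (Fin 2) F) : M2 F) := by
    simp [Units.val_mul]
  unfold act
  rw [h1, h2, h3]
  refine Prod.ext ?_ ?_ <;>
  · ext i j
    simp [Matrix.mul_apply, Matrix.vecMul, dotProduct, Matrix.add_apply, Matrix.smul_apply, Fin.sum_univ_two]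
    ring

set_option maxHeartbeats 1000000 in
lemma act_T {d : F} {g : GL (Fin 2) F × GL (Fin 2) F × GL (Fin 2) F}
    (hg : g ∈ Tset d) : act (xd d) g = xd d := by
  obtain ⟨a₁, b₁, a₂, b₂, h1, h2, e1, e2, e3⟩ := hg
  have hinv : ((g.1⁻¹ : GL (Fin 2) F) : M2 F)
      = (a₁ ^ 2 - d * b₁ ^ 2)⁻¹ • mm d a₁ (-b₁) := by
    rw [Matrix.coe_units_inv, e1, mm_inv h1]
  have e3' : (g.2.2 : M2 F)
      = mm d a₁ b₁ * ((a₂ ^ 2 - d * b₂ ^ 2)⁻¹ • mm d a₂ (-b₂)) := by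
    rw [e3, mm_inv h2]
  unfold act xd
  rw [hinv, e2, e3']
  refine Prod.ext ?_ ?_ <;>
  · show _ = _
    ext i j
    fin_cases i <;> fin_cases j <;>
      (simp [mm, Matrix.mul_apply, Matrix.vecMul, dotProduct, Matrix.add_apply,
        Matrix.smul_apply, Fin.sum_univ_two]; field_simp; ring)

lemma act_sigma (d : F) :
    act (xd d) (gammaGL F, gammaGL F, gammaGL F) = xd d := by
  refine Prod.ext ?_ ?_ <;>
  · show _ = _
    ext i j
    fin_cases i <;> fin_cases j <;>
      simp [act, xd, gammaGL, Matrix.mul_apply, Matrix.vecMul, dotProduct, Matrix.add_apply,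
        Matrix.smul_apply, Fin.sum_univ_two]

end Helpers
section Helpers2

variable {F : Type*} [Field F]

lemma gamma_sq : gammaGL F * gammaGL F = 1 := by
  apply Units.ext
  show (!![1, 0; 0, -1] : M2 F) * !![1, 0; 0, -1] = 1
  ext i j; fin_cases i <;> fin_cases j <;>
    simp [Matrix.mul_apply, Matrix.vecMul, dotProduct, Fin.sum_univ_two]

lemma sigma_sq :
    ((gammaGL F, gammaGL F, gammaGL F) :
      GL (Fin 2) F × GL (Fin 2) F × GL (Fin 2) F) * (gammaGL F, gammaGL F, gammaGL F) = 1 := by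
  refine Prod.ext gamma_sq (Prod.ext gamma_sq gamma_sq)

lemma gamma_mm_gamma (d a b : F) :
    (!![1, 0; 0, -1] : M2 F) * mm d a b * !![1, 0; 0, -1] = mm d a (-b) := by
  ext i j; fin_cases i <;> fin_cases j <;>
    (simp [mm, Matrix.mul_apply, Matrix.vecMul, dotProduct, Fin.sum_univ_two]; try ring)

lemma conj_T {d : F} {t : GL (Fin 2) F × GL (Fin 2) F × GL (Fin 2) F}
    (ht : t ∈ Tset d) :
    (gammaGL F, gammaGL F, gammaGL F) * t * (gammaGL F, gammaGL F, gammaGL F) ∈ Tset d := by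
  obtain ⟨a₁, b₁, a₂, b₂, h1, h2, e1, e2, e3⟩ := ht
  have h1' : a₁ ^ 2 - d * (-b₁) ^ 2 ≠ 0 := by rw [neg_sq]; exact h1
  have h2' : a₂ ^ 2 - d * (-b₂) ^ 2 ≠ 0 := by rw [neg_sq]; exact h2
  refine ⟨a₁, -b₁, a₂, -b₂, h1', h2', ?_, ?_, ?_⟩
  · show (!![1, 0; 0, -1] : M2 F) * (t.1 : M2 F) * !![1, 0; 0, -1] = _
    rw [e1, gamma_mm_gamma]
  · show (!![1, 0; 0, -1] : M2 F) * (t.2.1 : M2 F) * !![1, 0; 0, -1] = _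
    rw [e2, gamma_mm_gamma]
  · show (!![1, 0; 0, -1] : M2 F) * (t.2.2 : M2 F) * !![1, 0; 0, -1] = _
    rw [e3, mm_inv h2, mm_inv h2', neg_neg]
    ext i j; fin_cases i <;> fin_cases j <;>
      (simp [mm, Matrix.mul_apply, Matrix.vecMul, dotProduct, Matrix.smul_apply, Fin.sum_univ_two]; try ring)

end Helpers2
section Forward

variable {F : Type*} [Field F]

set_option maxHeartbeats 1000000 in
lemma stab_sub {d : F} (h2 : (2 : F) ≠ 0) (hd : d ≠ 0)
    {g : GL (Fin 2) F × GL (Fin 2) F × GL (Fin 2) F} (hg : act (xd d) g = xd d) :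
    g ∈ Tset d ∪ (fun t => (gammaGL F, gammaGL F, gammaGL F) * t) '' Tset d := by
  obtain ⟨g₁, g₂, g₃⟩ := g
  unfold act xd at hg
  dsimp only at hg
  rw [Prod.mk.injEq] at hg
  obtain ⟨h1, hN1⟩ := hg
  set a := ((g₃ : M2 F)) 0 0 with ha
  set b := ((g₃ : M2 F)) 0 1 with hb
  set c := ((g₃ : M2 F)) 1 0 with hc
  set e := ((g₃ : M2 F)) 1 1 with he
  have key : ∀ X : M2 F, (g₁ : M2 F) * (((g₁⁻¹ : GL (Fin 2) F) : M2 F) * X * (g₂ : M2 F))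
      = X * (g₂ : M2 F) := by
    intro X
    rw [← Matrix.mul_assoc, ← Matrix.mul_assoc, coe_mul_coe_inv, Matrix.one_mul]
  have key1 : (g₁ : M2 F) * (((g₁⁻¹ : GL (Fin 2) F) : M2 F) * (g₂ : M2 F)) = (g₂ : M2 F) := by
    rw [← Matrix.mul_assoc, coe_mul_coe_inv, Matrix.one_mul]
  have hM : mm d a c * (g₂ : M2 F) = (g₁ : M2 F) := by
    have h := congrArg (fun X => (g₁ : M2 F) * X) h1
    simp only [Matrix.mul_add, Matrix.mul_smul, key, key1, Matrix.mul_one, Matrix.one_mul] at h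
    rw [← h]
    ext i j; fin_cases i <;> fin_cases j <;>
      (simp [mm, Matrix.mul_apply, Matrix.vecMul, dotProduct, Matrix.add_apply, Matrix.smul_apply, Fin.sum_univ_two];
        try ring)
  have hN : mm d b e * (g₂ : M2 F) = (g₁ : M2 F) * !![0, d; 1, 0] := by
    have h := congrArg (fun X => (g₁ : M2 F) * X) hN1
    simp only [Matrix.mul_add, Matrix.mul_smul, key, key1, Matrix.mul_one, Matrix.one_mul] at h
    rw [← h]
    ext i j; fin_cases i <;> fin_cases j <;>
      (simp [mm, Matrix.mul_apply, Matrix.vecMul, dotProduct, Matrix.add_apply, Matrix.smul_apply, Fin.sum_univ_two];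
        try ring)
  have hdM : a ^ 2 - d * c ^ 2 ≠ 0 := by
    have hdet : (mm d a c).det * ((g₂ : M2 F)).det = ((g₁ : M2 F)).det := by
      rw [← Matrix.det_mul, hM]
    intro h0
    apply det_coe_ne_zero g₁
    rw [← hdet, det_mm, h0, zero_mul]
  set α := (a * b - c * e * d) / (a ^ 2 - d * c ^ 2) with hα
  set β := (a * e - c * b) / (a ^ 2 - d * c ^ 2) with hβ
  have hMw : mm d a c * mm d α β = mm d b e := by
    rw [mm_mul]
    have hdM' : a ^ 2 - c ^ 2 * d ≠ 0 := by intro h0; apply hdM; linear_combination h0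
    ext i j; fin_cases i <;> fin_cases j <;>
      (simp [mm]; rw [hα, hβ]; field_simp; try ring; try tauto)
  have hMunit : IsUnit (mm d a c) :=
    (Matrix.isUnit_iff_isUnit_det _).2 (isUnit_iff_ne_zero.2 (by rw [det_mm]; exact hdM))
  have hw : mm d α β * (g₂ : M2 F) = (g₂ : M2 F) * !![0, d; 1, 0] := by
    apply hMunit.mul_left_cancel
    rw [← Matrix.mul_assoc, hMw, hN, ← Matrix.mul_assoc, hM]
  have hg₂u : IsUnit ((g₂ : M2 F)) := g₂.isUnit
  have hsq : mm d α β * mm d α β = (d : F) • (1 : M2 F) := by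
    apply hg₂u.mul_right_cancel
    calc (mm d α β * mm d α β) * (g₂ : M2 F)
        = mm d α β * (mm d α β * (g₂ : M2 F)) := Matrix.mul_assoc _ _ _
      _ = mm d α β * ((g₂ : M2 F) * !![0, d; 1, 0]) := by rw [hw]
      _ = (mm d α β * (g₂ : M2 F)) * !![0, d; 1, 0] := (Matrix.mul_assoc _ _ _).symm
      _ = ((g₂ : M2 F) * !![0, d; 1, 0]) * !![0, d; 1, 0] := by rw [hw]
      _ = (g₂ : M2 F) * (!![0, d; 1, 0] * !![0, d; 1, 0]) := Matrix.mul_assoc _ _ _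
      _ = ((d : F) • (1 : M2 F)) * (g₂ : M2 F) := by
          have hδδ : (!![0, d; 1, 0] : M2 F) * !![0, d; 1, 0] = (d : F) • (1 : M2 F) := by
            ext i j; fin_cases i <;> fin_cases j <;>
              simp [Matrix.mul_apply, Matrix.vecMul, dotProduct, Fin.sum_univ_two]
          rw [hδδ, Matrix.mul_smul, Matrix.mul_one, Matrix.smul_mul, Matrix.one_mul]
  have hsq' := hsq
  rw [mm_mul] at hsq'
  have e10 : α * β + β * α = 0 := by
    have h' := congrFun (congrFun hsq' 1) 0
    simpa [mm, Matrix.smul_apply] using h'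
  have e00 : α * α + β * β * d = d := by
    have h' := congrFun (congrFun hsq' 0) 0
    simpa [mm, Matrix.smul_apply] using h'
  have hαβ : α * β = 0 := by
    have h' : 2 * (α * β) = 0 := by linear_combination e10
    rcases mul_eq_zero.1 h' with h'' | h''
    · exact absurd h'' h2
    · exact h''
  rcases mul_eq_zero.1 hαβ with hα0 | hβ0
  · -- α = 0
    rw [hα0] at hw hMw e00
    have hβ1 : (β - 1) * (β + 1) = 0 := by
      have h' : (β * β - 1) * d = 0 := by linear_combination e00
      rcases mul_eq_zero.1 h' with h'' | h''
      · linear_combination h''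
      · exact absurd h'' hd
    rcases mul_eq_zero.1 hβ1 with hb1 | hb1
    · -- β = 1
      have hβ' : β = 1 := by linear_combination hb1
      rw [hβ'] at hw hMw
      have q_eq := congrFun (congrFun hw 0) 0
      have s_eq := congrFun (congrFun hw 1) 0
      simp [mm, Matrix.mul_apply, Matrix.vecMul, dotProduct, Fin.sum_univ_two] at q_eq s_eq
      rw [mm_mul] at hMw
      have hb' := congrFun (congrFun hMw 0) 0
      have he' := congrFun (congrFun hMw 1) 0
      simp [mm] at hb' he'
      have hG₂ : (g₂ : M2 F) = mm d ((g₂ : M2 F) 0 0) ((g₂ : M2 F) 1 0) := by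
        ext i j; fin_cases i <;> fin_cases j <;> simp [mm]
        · linear_combination -q_eq
        · linear_combination -s_eq
      have hG₃ : (g₃ : M2 F) = mm d a c := by
        ext i j; fin_cases i <;> fin_cases j <;> simp [mm, ← ha, ← hb, ← hc, ← he]
        · linear_combination -hb'
        · linear_combination -he'
      have hG₁ : (g₁ : M2 F) = mm d (a * ((g₂ : M2 F) 0 0) + c * ((g₂ : M2 F) 1 0) * d)
          (a * ((g₂ : M2 F) 1 0) + c * ((g₂ : M2 F) 0 0)) := by
        rw [← hM, hG₂, mm_mul]; simp [mm]
      have hD1 : (a * ((g₂ : M2 F) 0 0) + c * ((g₂ : M2 F) 1 0) * d) ^ 2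
          - d * (a * ((g₂ : M2 F) 1 0) + c * ((g₂ : M2 F) 0 0)) ^ 2 ≠ 0 := by
        rw [← det_mm, ← hG₁]; exact det_coe_ne_zero g₁
      have hD2 : ((g₂ : M2 F) 0 0) ^ 2 - d * ((g₂ : M2 F) 1 0) ^ 2 ≠ 0 := by
        rw [← det_mm, ← hG₂]; exact det_coe_ne_zero g₂
      have hG₃' : (g₃ : M2 F)
          = mm d (a * ((g₂ : M2 F) 0 0) + c * ((g₂ : M2 F) 1 0) * d)
              (a * ((g₂ : M2 F) 1 0) + c * ((g₂ : M2 F) 0 0))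
            * (mm d ((g₂ : M2 F) 0 0) ((g₂ : M2 F) 1 0))⁻¹ := by
        rw [hG₃, mm_inv hD2]
        have hD2' : ((g₂ : M2 F) 0 0) ^ 2 - ((g₂ : M2 F) 1 0) ^ 2 * d ≠ 0 := by
          intro h0; apply hD2; linear_combination h0
        ext i j; fin_cases i <;> fin_cases j <;>
          (simp [mm, Matrix.mul_apply, Matrix.vecMul, dotProduct, Matrix.smul_apply, Fin.sum_univ_two];
            field_simp; ring)
      exact Or.inl ⟨_, _, _, _, hD1, hD2, hG₁, hG₂, hG₃'⟩
    · -- β = -1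
      have hβ' : β = -1 := by linear_combination hb1
      rw [hβ'] at hw hMw
      have q_eq := congrFun (congrFun hw 0) 0
      have s_eq := congrFun (congrFun hw 1) 0
      simp [mm, Matrix.mul_apply, Matrix.vecMul, dotProduct, Fin.sum_univ_two] at q_eq s_eq
      rw [mm_mul] at hMw
      have hb' := congrFun (congrFun hMw 0) 0
      have he' := congrFun (congrFun hMw 1) 0
      simp [mm] at hb' he'
      have hγG₂ : (!![1, 0; 0, -1] : M2 F) * (g₂ : M2 F)
          = mm d ((g₂ : M2 F) 0 0) (-((g₂ : M2 F) 1 0)) := by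
        ext i j; fin_cases i <;> fin_cases j <;>
          (simp [mm, Matrix.mul_apply, Matrix.vecMul, dotProduct, Fin.sum_univ_two])
        · linear_combination -q_eq
        · linear_combination s_eq
      have hγG₃ : (!![1, 0; 0, -1] : M2 F) * (g₃ : M2 F) = mm d a (-c) := by
        ext i j; fin_cases i <;> fin_cases j <;>
          (simp [mm, Matrix.mul_apply, Matrix.vecMul, dotProduct, Fin.sum_univ_two, ← ha, ← hb, ← hc, ← he])
        · linear_combination -hb'
        · linear_combination he'
      have hcomm : (!![1, 0; 0, -1] : M2 F) * mm d a c = mm d a (-c) * !![1, 0; 0, -1] := by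
        ext i j; fin_cases i <;> fin_cases j <;>
          (simp [mm, Matrix.mul_apply, Matrix.vecMul, dotProduct, Fin.sum_univ_two]; try ring)
      have hγG₁ : (!![1, 0; 0, -1] : M2 F) * (g₁ : M2 F)
          = mm d a (-c) * mm d ((g₂ : M2 F) 0 0) (-((g₂ : M2 F) 1 0)) := by
        rw [← hM, ← Matrix.mul_assoc, hcomm, Matrix.mul_assoc, hγG₂]
      rw [mm_mul] at hγG₁
      have hdγ : (!![1, 0; 0, -1] : M2 F).det = -1 := by simp [Matrix.det_fin_two]
      have hD1 : (a * ((g₂ : M2 F) 0 0) + -c * -((g₂ : M2 F) 1 0) * d) ^ 2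
          - d * (a * -((g₂ : M2 F) 1 0) + -c * ((g₂ : M2 F) 0 0)) ^ 2 ≠ 0 := by
        rw [← det_mm, ← hγG₁, Matrix.det_mul, hdγ, neg_one_mul]
        simpa using det_coe_ne_zero g₁
      have hD2 : ((g₂ : M2 F) 0 0) ^ 2 - d * (-((g₂ : M2 F) 1 0)) ^ 2 ≠ 0 := by
        rw [← det_mm, ← hγG₂, Matrix.det_mul, hdγ, neg_one_mul]
        simpa using det_coe_ne_zero g₂
      have hG₃' : (!![1, 0; 0, -1] : M2 F) * (g₃ : M2 F)
          = mm d (a * ((g₂ : M2 F) 0 0) + -c * -((g₂ : M2 F) 1 0) * d)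
              (a * -((g₂ : M2 F) 1 0) + -c * ((g₂ : M2 F) 0 0))
            * (mm d ((g₂ : M2 F) 0 0) (-((g₂ : M2 F) 1 0)))⁻¹ := by
        have hunit2 : IsUnit (mm d ((g₂ : M2 F) 0 0) (-((g₂ : M2 F) 1 0))).det := by
          rw [det_mm]; exact isUnit_iff_ne_zero.2 hD2
        rw [hγG₃, ← mm_mul, Matrix.mul_assoc, Matrix.mul_nonsing_inv _ hunit2, Matrix.mul_one]
      refine Or.inr ⟨(gammaGL F * g₁, gammaGL F * g₂, gammaGL F * g₃),
        ⟨_, _, _, _, hD1, hD2, ?_, ?_, ?_⟩, ?_⟩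
      · show ((gammaGL F * g₁ : GL (Fin 2) F) : M2 F) = _
        rw [Units.val_mul]; exact hγG₁
      · show ((gammaGL F * g₂ : GL (Fin 2) F) : M2 F) = _
        rw [Units.val_mul]; exact hγG₂
      · show ((gammaGL F * g₃ : GL (Fin 2) F) : M2 F) = _
        rw [Units.val_mul]; exact hG₃'
      · show (gammaGL F * (gammaGL F * g₁), gammaGL F * (gammaGL F * g₂),
          gammaGL F * (gammaGL F * g₃)) = (g₁, g₂, g₃)
        rw [← mul_assoc, ← mul_assoc, ← mul_assoc, gamma_sq, one_mul, one_mul, one_mul]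
  · -- β = 0
    exfalso
    rw [hβ0] at hw
    have eA := congrFun (congrFun hw 0) 0
    have eB := congrFun (congrFun hw 1) 0
    simp [mm, Matrix.mul_apply, Matrix.vecMul, dotProduct, Fin.sum_univ_two] at eA eB
    apply det_coe_ne_zero g₂
    rw [Matrix.det_fin_two]
    linear_combination ((g₂ : M2 F) 1 0) * eA - ((g₂ : M2 F) 0 0) * eB

end Forward

/-- in characteristic ≠ 2, the stabilizer of `x(d)` in `G` is `T ∪ σ·T`
where `σ = (γ, γ, γ)`, `γ = diag(1,−1)`; in particular `σ` stabilizes `x(d)` and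
`σ·T = T·σ`. -/
theorem stmt6 {F : Type*} [Field F] (h2 : (2 : F) ≠ 0) (d : Fˣ) :
    {g : GL (Fin 2) F × GL (Fin 2) F × GL (Fin 2) F | act (xd (d : F)) g = xd (d : F)} =
        Tset (d : F) ∪
          (fun t => (gammaGL F, gammaGL F, gammaGL F) * t) '' Tset (d : F) ∧
      act (xd (d : F)) (gammaGL F, gammaGL F, gammaGL F) = xd (d : F) ∧
      (fun t => (gammaGL F, gammaGL F, gammaGL F) * t) '' Tset (d : F) =
        (fun t => t * (gammaGL F, gammaGL F, gammaGL F)) '' Tset (d : F) := by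
  refine ⟨?_, act_sigma (d : F), ?_⟩
  · ext g
    simp only [Set.mem_setOf_eq, Set.mem_union]
    constructor
    · intro hg
      simpa [Set.mem_union] using stab_sub h2 (Units.ne_zero d) hg
    · rintro (ht | ⟨t, ht, rfl⟩)
      · exact act_T ht
      · rw [act_mul, act_sigma, act_T ht]
  · ext g
    simp only [Set.mem_image]
    constructor
    · rintro ⟨t, ht, rfl⟩
      refine ⟨(gammaGL F, gammaGL F, gammaGL F) * t * (gammaGL F, gammaGL F, gammaGL F),
        conj_T ht, ?_⟩
      rw [mul_assoc, sigma_sq, mul_one]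
    · rintro ⟨t, ht, rfl⟩
      refine ⟨(gammaGL F, gammaGL F, gammaGL F) * t * (gammaGL F, gammaGL F, gammaGL F),
        conj_T ht, ?_⟩
      rw [← mul_assoc, ← mul_assoc, sigma_sq, one_mul]
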